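/- Let m ≥ 2. For every n ≥ 1, the reversal of h_n equals 0^{-1} φ_m(h_{n-1}^R) 0; that is, φ_m(h_{n-1}^R)·0 = 0·h_n^R. -/

import Mathlib

/-- The `m`-bonacci morphism on letters: `i ↦ 0(i+1)` for `i ≤ m-2`, `(m-1) ↦ 0`. -/
def phi (m a : ℕ) : List ℕ := if a = m - 1 then [0] else [0, a + 1]

/-- The `m`-bonacci morphism on words. -/
def phiW (m : ℕ) (w : List ℕ) : List ℕ := w.flatMap (phi m)

/-- The finite `m`-bonacci words `h_n = φ_m^n(0)`. -/
def hb (m : ℕ) : ℕ → List ℕ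
  | 0 => [0]
  | n+1 => phiW m (hb m n)

/-- The palindromic prefixes of the `m`-bonacci word, shifted:
`ub m n` is the paper's `u_{n+1}` (so `ub m 0 = u₁ = ε`, and `u_{n+2} = h_n u_{n+1}`). -/
def ub (m : ℕ) : ℕ → List ℕ
  | 0 => []
  | n+1 => hb m n ++ ub m n

/-- Number of occurrences of `x` as a factor of `w` (counted by starting position). -/
def occ (x w : List ℕ) : ℕ :=
  ((List.range (w.length + 1)).filter (fun i => x.isPrefixOf (w.drop i))).length

/-- A word is closed if it is a single letter or has a border (a proper factor that
is both a prefix and a suffix) occurring exactly twice in it. -/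
def ClosedWord (w : List ℕ) : Prop :=
  w.length = 1 ∨
    ∃ x : List ℕ, x ≠ [] ∧ x.length < w.length ∧ x <+: w ∧ x <:+ w ∧ occ x w = 2

lemma phiW_rev (m : ℕ) (w : List ℕ) :
    phiW m w.reverse ++ [0] = 0 :: (phiW m w).reverse := by
  induction w with
  | nil => rfl
  | cons a t ih =>
    have h1 : phi m a ++ [0] = 0 :: (phi m a).reverse := by
      unfold phi; split <;> rfl
    have h2 : phiW m ((a :: t).reverse) = phiW m t.reverse ++ phi m a := by
      simp [phiW]
    have h3 : (phiW m (a :: t)).reverse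
        = (phiW m t).reverse ++ (phi m a).reverse := by
      simp [phiW]
    calc phiW m ((a :: t).reverse) ++ [0]
        = phiW m t.reverse ++ (phi m a ++ [0]) := by
          rw [h2, List.append_assoc]
      _ = (phiW m t.reverse ++ [0]) ++ (phi m a).reverse := by
          rw [h1]; simp
      _ = (0 :: (phiW m t).reverse) ++ (phi m a).reverse := by rw [ih]
      _ = 0 :: (phiW m (a :: t)).reverse := by rw [h3]; rfl

/-- for `m ≥ 2` and `n ≥ 1`, `h_n^R = 0⁻¹ φ_m(h_{n-1}^R) 0`, i.e.
`φ_m(h_{n-1}^R)·0 = 0·h_n^R`. -/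
theorem hb_reverse_phi :
    ∀ m n : ℕ, 2 ≤ m →
      phiW m ((hb m n).reverse) ++ [0] = 0 :: (hb m (n + 1)).reverse := by
  intro m n _
  show phiW m ((hb m n).reverse) ++ [0] = 0 :: (phiW m (hb m n)).reverse
  exact phiW_rev m (hb m n)
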